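/- Let X be a pre-ordered vector space with positive wedge X₊, let W be the τ_ru-closure of X₊, and let A = W ∩ (−W). Then the image [W] of W under the quotient map X → X/A is an Archimedean cone in X/A: [W] is a wedge with [W] ∩ (−[W]) = {0}, and whenever n·ξ ≤ η for all n ∈ ℕ for some ξ ∈ X/A and η ∈ [W] (with respect to the pre-order induced by [W]), then ξ ≤ 0. Moreover, if X₊ is majorizing in X then [W] is majorizing in X/A. -/

import Mathlib

/-- A wedge in a real vector space: closed under addition and nonnegative scaling. -/
def IsWedge {V : Type*} [AddCommGroup V] [Module ℝ V] (W : Set V) : Prop :=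
  (∀ x ∈ W, ∀ y ∈ W, x + y ∈ W) ∧ ∀ t : ℝ, 0 ≤ t → ∀ x ∈ W, t • x ∈ W

/-- Relative uniform convergence of the sequence `x` to `l`, with respect to the
positive wedge `P`: for some regulator `w ∈ P`, for every `m ≥ 1` eventually
`±(x k − l) ≤ (1/m)·w` (inequalities expressed via membership in `P`). -/
def RuConv {V : Type*} [AddCommGroup V] [Module ℝ V] (P : Set V) (x : ℕ → V) (l : V) : Prop :=
  ∃ w ∈ P, ∀ m : ℕ, 1 ≤ m → ∃ N : ℕ, ∀ k ≥ N,
    (1 / (m : ℝ)) • w - (x k - l) ∈ P ∧ (1 / (m : ℝ)) • w + (x k - l) ∈ P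

/-- A set `S` is ru-closed if it contains the limits of all ru-convergent sequences in `S`. -/
def RuClosed {V : Type*} [AddCommGroup V] [Module ℝ V] (P : Set V) (S : Set V) : Prop :=
  ∀ (x : ℕ → V) (l : V), (∀ n, x n ∈ S) → RuConv P x l → l ∈ S

/-- `S′_ru`: the set of limits of ru-convergent sequences in `S`. -/
def ruDeriv {V : Type*} [AddCommGroup V] [Module ℝ V] (P : Set V) (S : Set V) : Set V :=
  {l | ∃ x : ℕ → V, (∀ n, x n ∈ S) ∧ RuConv P x l}

/-- The τ_ru-closure of `S`: the smallest ru-closed set containing `S`. -/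
def ruClosure {V : Type*} [AddCommGroup V] [Module ℝ V] (P : Set V) (S : Set V) : Set V :=
  ⋂₀ {C : Set V | S ⊆ C ∧ RuClosed P C}

section Aux
variable {X : Type*} [AddCommGroup X] [Module ℝ X] (P : Set X)

lemma subset_ruClosure' : P ⊆ ruClosure P P := fun x hx C hC => hC.1 hx

lemma ruClosed_ruClosure' : RuClosed P (ruClosure P P) := by
  intro x l hx hconv C hC
  exact hC.2 x l (fun n => hx n C hC) hconv

lemma ruClosure_min' {C : Set X} (h1 : P ⊆ C) (h2 : RuClosed P C) :
    ruClosure P P ⊆ C := fun x hx => hx C ⟨h1, h2⟩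

variable (hP : IsWedge P)
include hP

lemma ruClosure_smul' {t : ℝ} (ht : 0 ≤ t) {x : X}
    (hx : x ∈ ruClosure P P) : t • x ∈ ruClosure P P := by
  refine ruClosure_min' P (C := {y | t • y ∈ ruClosure P P}) ?_ ?_ hx
  · intro p hp; exact subset_ruClosure' P (hP.2 t ht p hp)
  · rintro y l hy ⟨w, hw, hconv⟩
    refine ruClosed_ruClosure' P (fun n => t • y n) (t • l) hy
      ⟨t • w, hP.2 t ht w hw, fun m hm => ?_⟩
    obtain ⟨N, hN⟩ := hconv m hm
    refine ⟨N, fun k hk => ⟨?_, ?_⟩⟩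
    · have := hP.2 t ht _ (hN k hk).1
      convert this using 1
      simp only []
      module
    · have := hP.2 t ht _ (hN k hk).2
      convert this using 1
      simp only []
      module

lemma ruClosure_add' : ∀ x ∈ ruClosure P P, ∀ y ∈ ruClosure P P,
    x + y ∈ ruClosure P P := by
  have step1 : ∀ p ∈ P, ∀ y ∈ ruClosure P P, p + y ∈ ruClosure P P := by
    intro p hp
    refine ruClosure_min' P (C := {y | p + y ∈ ruClosure P P}) ?_ ?_
    · intro q hq; exact subset_ruClosure' P (hP.1 p hp q hq)
    · rintro y l hy ⟨w, hw, hconv⟩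
      refine ruClosed_ruClosure' P (fun n => p + y n) (p + l) hy ⟨w, hw, fun m hm => ?_⟩
      obtain ⟨N, hN⟩ := hconv m hm
      refine ⟨N, fun k hk => ⟨?_, ?_⟩⟩
      · have := (hN k hk).1; convert this using 2; simp only []; abel
      · have := (hN k hk).2; convert this using 2; simp only []; abel
  intro x hx y hy
  refine ruClosure_min' P (C := {z | z + y ∈ ruClosure P P}) ?_ ?_ hx
  · intro p hp; exact step1 p hp y hy
  · rintro z l hz ⟨w, hw, hconv⟩
    refine ruClosed_ruClosure' P (fun n => z n + y) (l + y) hz ⟨w, hw, fun m hm => ?_⟩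
    obtain ⟨N, hN⟩ := hconv m hm
    refine ⟨N, fun k hk => ⟨?_, ?_⟩⟩
    · have := (hN k hk).1; convert this using 2; simp only []; abel
    · have := (hN k hk).2; convert this using 2; simp only []; abel

lemma ruClosure_arch' (h0 : (0:X) ∈ P) {w x : X}
    (hw : w ∈ ruClosure P P) (hx : ∀ n : ℕ, w - (n:ℝ) • x ∈ ruClosure P P) :
    -x ∈ ruClosure P P := by
  set W := ruClosure P P with hWdef
  have hsub : W ⊆ {u : X | ∀ x v, v ∈ P → (∀ n : ℕ, u + v - (n:ℝ) • x ∈ W) → -x ∈ W} := by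
    refine ruClosure_min' P ?_ ?_
    · -- P is contained
      intro p hp x v hv h
      have hpv : p + v ∈ P := hP.1 p hp v hv
      refine ruClosed_ruClosure' P
        (fun k => (1/((k:ℝ)+1)) • (p + v - ((k:ℝ)+1) • x)) (-x) ?_
        ⟨p + v, hpv, fun m hm => ⟨m, fun k hk => ?_⟩⟩
      · intro k
        have hk : (0:ℝ) ≤ 1/((k:ℝ)+1) := by positivity
        have := hx
        have h2 : p + v - ((k:ℝ)+1) • x ∈ W := by
          have := h (k+1); push_cast at this; exact this
        exact ruClosure_smul' P hP hk h2
      · have hk1 : ((k:ℝ)+1) ≠ 0 := by positivity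
        have hm0 : (0:ℝ) < m := by exact_mod_cast hm
        have hdiff : (fun k => (1/((k:ℝ)+1)) • (p + v - ((k:ℝ)+1) • x)) k - (-x)
            = (1/((k:ℝ)+1)) • (p + v) := by
          simp only []
          rw [smul_sub, smul_smul, one_div_mul_cancel hk1, one_smul]
          abel
        rw [hdiff]
        constructor
        · have hco : (0:ℝ) ≤ 1/(m:ℝ) - 1/((k:ℝ)+1) := by
            rw [sub_nonneg]
            apply one_div_le_one_div_of_le hm0
            have : (m:ℝ) ≤ (k:ℝ) := by exact_mod_cast hk
            linarith
          have := hP.2 _ hco _ hpv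
          rwa [sub_smul] at this
        · have hco : (0:ℝ) ≤ 1/(m:ℝ) + 1/((k:ℝ)+1) := by positivity
          have := hP.2 _ hco _ hpv
          rwa [add_smul] at this
    · -- ru-closed
      rintro u l hu ⟨r, hr, hconv⟩ x v hv h
      obtain ⟨N, hN⟩ := hconv 1 le_rfl
      have hNP : r + (u N - l) ∈ P := by
        have := (hN N le_rfl).2
        simpa using this
      refine hu N x (v + r) (hP.1 v hv r hr) (fun n => ?_)
      have heq : (r + (u N - l)) + (l + v - (n:ℝ) • x) = u N + (v + r) - (n:ℝ) • x := by
        abel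
      rw [← heq]
      exact ruClosure_add' P hP _ (subset_ruClosure' P hNP) _ (h n)
  have := hsub hw x 0 h0 (fun n => by simpa using hx n)
  exact this

end Aux

/-- Let `X` be a pre-ordered vector space with positive wedge
`P`, let `W` be the τ_ru-closure of `P` and `A = W ∩ (−W)` (a subspace).  Then
the image `[W]` of `W` in `X/A` is an Archimedean cone: it is a wedge,
`[W] ∩ (−[W]) = {0}`, and `n·ξ ≤ η ∈ [W]` for all `n` implies `ξ ≤ 0`.
Moreover `[W]` is majorizing in `X/A` whenever `P` is majorizing in `X`. -/
theorem quotient_closure_archimedean_cone {X : Type*} [AddCommGroup X] [Module ℝ X]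
    (P : Set X) (hP : IsWedge P)
    (A : Submodule ℝ X) (hA : (A : Set X) = ruClosure P P ∩ (-(ruClosure P P))) :
    IsWedge (A.mkQ '' ruClosure P P) ∧
    (A.mkQ '' ruClosure P P) ∩ (-(A.mkQ '' ruClosure P P)) = {0} ∧
    (∀ ξ η : X ⧸ A, η ∈ A.mkQ '' ruClosure P P →
      (∀ n : ℕ, η - n • ξ ∈ A.mkQ '' ruClosure P P) → -ξ ∈ A.mkQ '' ruClosure P P) ∧
    ((∀ x : X, ∃ a ∈ P, ∃ b ∈ P, x = a - b) →
      ∀ ξ : X ⧸ A, ∃ a ∈ A.mkQ '' ruClosure P P, ∃ b ∈ A.mkQ '' ruClosure P P, ξ = a - b) := by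
  set W := ruClosure P P with hWdef
  -- 0 ∈ W, P nonempty, 0 ∈ P
  have h0W : (0:X) ∈ W := by
    have : (0:X) ∈ (A : Set X) := A.zero_mem
    rw [hA] at this; exact this.1
  have hPne : P.Nonempty := by
    by_contra hne
    rw [Set.not_nonempty_iff_eq_empty] at hne
    have : W ⊆ (∅ : Set X) := by
      refine ruClosure_min' P ?_ ?_
      · rw [hne]
      · rintro x l hx ⟨r, hr, _⟩
        rw [hne] at hr; exact hr.elim
    exact this h0W
  have h0P : (0:X) ∈ P := by
    obtain ⟨p, hp⟩ := hPne
    simpa using hP.2 0 le_rfl p hp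
  have hAW : (A : Set X) ⊆ W := by rw [hA]; exact Set.inter_subset_left
  -- key membership characterization
  have hMem : ∀ z : X, A.mkQ z ∈ A.mkQ '' W ↔ z ∈ W := by
    intro z
    constructor
    · rintro ⟨w, hw, heq⟩
      have : w - z ∈ A := by
        rwa [Submodule.mkQ_apply, Submodule.mkQ_apply, Submodule.Quotient.eq] at heq
      have hzw : z - w ∈ W := by
        have h2 : w - z ∈ W ∩ -W := by rw [← hA]; exact this
        simpa [neg_sub] using h2.2
      have := ruClosure_add' P hP w hw (z - w) hzw
      simpa using this
    · intro hz; exact ⟨z, hz, rfl⟩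
  refine ⟨⟨?_, ?_⟩, ?_, ?_, ?_⟩
  · rintro ξ ⟨a, ha, rfl⟩ η ⟨b, hb, rfl⟩
    exact ⟨a + b, ruClosure_add' P hP a ha b hb, by simp⟩
  · rintro t ht ξ ⟨a, ha, rfl⟩
    exact ⟨t • a, ruClosure_smul' P hP ht ha, by simp⟩
  · ext ξ
    simp only [Set.mem_inter_iff, Set.mem_neg, Set.mem_singleton_iff]
    constructor
    · rintro ⟨⟨a, ha, rfl⟩, hneg⟩
      have : A.mkQ (-a) ∈ A.mkQ '' W := by
        rwa [map_neg]
      have hna : -a ∈ W := (hMem _).mp this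
      have haA : a ∈ A := by
        have : a ∈ (A : Set X) := by rw [hA]; exact ⟨ha, by simpa using hna⟩
        exact this
      simpa [Submodule.Quotient.mk_eq_zero] using haA
    · rintro rfl
      exact ⟨⟨0, h0W, by simp⟩, by simpa using (⟨0, h0W, by simp⟩ :
        ∃ x ∈ W, A.mkQ x = 0)⟩
  · intro ξ η hη hn
    obtain ⟨w, hw, rfl⟩ := hη
    obtain ⟨x, rfl⟩ := A.mkQ_surjective ξ
    have hx : ∀ n : ℕ, w - (n:ℝ) • x ∈ W := by
      intro n
      have := hn n
      have heq : A.mkQ w - n • A.mkQ x = A.mkQ (w - (n:ℝ) • x) := by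
        rw [map_sub, map_smul, Nat.cast_smul_eq_nsmul]
      rw [heq] at this
      exact (hMem _).mp this
    have := ruClosure_arch' P hP h0P hw hx
    exact ⟨-x, this, by simp⟩
  · intro hmaj ξ
    obtain ⟨x, rfl⟩ := A.mkQ_surjective ξ
    obtain ⟨a, ha, b, hb, hab⟩ := hmaj x
    exact ⟨A.mkQ a, ⟨a, subset_ruClosure' P ha, rfl⟩,
      A.mkQ b, ⟨b, subset_ruClosure' P hb, rfl⟩, by rw [hab, map_sub]⟩
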